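/- arXiv:2205.04531 — 2 statements merged into one kernel-verified Lean document; each statement's English description precedes it below -/
import Mathlib

section
/- Let g > 0 and k₀ be real numbers and define φ : ℝ → ℝ by φ(σ) = g/(1 + exp(k₀ - σ)) - g/(1 + exp(k₀)). Then φ satisfies the sector condition with bounds 0 and g/4: for every σ ∈ ℝ, 0 ≤ σ·φ(σ) and σ·φ(σ) ≤ (g/4)·σ² (equivalently, for every σ ≠ 0, 0 ≤ φ(σ)/σ ≤ g/4). -/
open Real

lemma sig_hasDeriv (k₀ x : ℝ) :
    HasDerivAt (fun x => (1 + Real.exp (k₀ - x))⁻¹)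
      (Real.exp (k₀ - x) / (1 + Real.exp (k₀ - x)) ^ 2) x := by
  have hu : HasDerivAt (fun x => 1 + Real.exp (k₀ - x)) (-Real.exp (k₀ - x)) x := by
    have : HasDerivAt (fun x => k₀ - x) (-1) x := by
      exact (hasDerivAt_id' x).const_sub k₀
    simpa using (HasDerivAt.const_add 1 ((Real.hasDerivAt_exp (k₀ - x)).comp x this))
  have hne : (1 + Real.exp (k₀ - x)) ≠ 0 := by positivity
  have := (hu.inv hne : HasDerivAt (fun y => (1 + Real.exp (k₀ - y))⁻¹) _ x)
  rw [neg_neg] at this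
  exact this

lemma sig_lip (k₀ : ℝ) (a b : ℝ) :
    |(1 + Real.exp (k₀ - a))⁻¹ - (1 + Real.exp (k₀ - b))⁻¹| ≤ (1/4) * |a - b| := by
  have hd : ∀ x : ℝ, ‖deriv (fun x => (1 + Real.exp (k₀ - x))⁻¹) x‖ ≤ 1/4 := by
    intro x
    rw [(sig_hasDeriv k₀ x).deriv]
    set t := Real.exp (k₀ - x) with ht
    have htpos : 0 < t := Real.exp_pos _
    have h4 : t / (1 + t) ^ 2 ≤ 1/4 := by
      rw [div_le_iff₀ (by positivity)]
      nlinarith [sq_nonneg (1 - t)]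
    rw [Real.norm_eq_abs, abs_of_nonneg (by positivity)]
    exact h4
  have hdiff : Differentiable ℝ (fun x => (1 + Real.exp (k₀ - x))⁻¹) :=
    fun x => (sig_hasDeriv k₀ x).differentiableAt
  have hL : LipschitzWith (1/4 : NNReal) (fun x => (1 + Real.exp (k₀ - x))⁻¹) :=
    lipschitzWith_of_nnnorm_deriv_le hdiff (fun x => by
      rw [← NNReal.coe_le_coe, coe_nnnorm]
      simpa using hd x)
  have := hL.dist_le_mul a b
  simpa [Real.dist_eq, NNReal.coe_div] using this

lemma sig_mono (k₀ : ℝ) : Monotone (fun x => (1 + Real.exp (k₀ - x))⁻¹) := by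
  intro a b hab
  have h1 : Real.exp (k₀ - b) ≤ Real.exp (k₀ - a) := Real.exp_le_exp.2 (by linarith)
  have : (0:ℝ) < 1 + Real.exp (k₀ - b) := by positivity
  have : (0:ℝ) < 1 + Real.exp (k₀ - a) := by positivity
  dsimp only
  gcongr

/-- The centered sigmoid `φ(σ) = g/(1 + exp(k₀ - σ)) - g/(1 + exp(k₀))` (with
`g > 0`) lies in the sector `[0, g/4]`: for every `σ`, `0 ≤ σ·φ(σ)` and
`σ·φ(σ) ≤ (g/4)·σ²`; equivalently `0 ≤ φ(σ)/σ ≤ g/4` for `σ ≠ 0`. -/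
theorem stmt_13 (g k₀ : ℝ) (hg : 0 < g) (φ : ℝ → ℝ)
    (hφ : ∀ σ, φ σ = g / (1 + Real.exp (k₀ - σ)) - g / (1 + Real.exp k₀)) :
    (∀ σ : ℝ, 0 ≤ σ * φ σ ∧ σ * φ σ ≤ (g / 4) * σ ^ 2) ∧
    (∀ σ : ℝ, σ ≠ 0 → 0 ≤ φ σ / σ ∧ φ σ / σ ≤ g / 4) := by
  have key : ∀ σ : ℝ, 0 ≤ σ * φ σ ∧ σ * φ σ ≤ (g / 4) * σ ^ 2 := by
    intro σ
    have hrw : φ σ = g * ((1 + Real.exp (k₀ - σ))⁻¹ - (1 + Real.exp (k₀ - 0))⁻¹) := by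
      rw [hφ]; ring_nf
    constructor
    · rcases le_or_gt 0 σ with h | h
      · have := sig_mono k₀ (show (0:ℝ) ≤ σ from h)
        have : 0 ≤ φ σ := by rw [hrw]; nlinarith
        positivity
      · have := sig_mono k₀ (show σ ≤ (0:ℝ) from h.le)
        have hφn : φ σ ≤ 0 := by rw [hrw]; nlinarith
        nlinarith
    · have habs : |(1 + Real.exp (k₀ - σ))⁻¹ - (1 + Real.exp (k₀ - 0))⁻¹| ≤ (1/4) * |σ| := by
        simpa using sig_lip k₀ σ 0
      have h1 : σ * φ σ ≤ |σ| * |φ σ| := by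
        calc σ * φ σ ≤ |σ * φ σ| := le_abs_self _
        _ = |σ| * |φ σ| := abs_mul _ _
      have h2 : |φ σ| ≤ g * ((1/4) * |σ|) := by
        rw [hrw, abs_mul, abs_of_pos hg]
        exact mul_le_mul_of_nonneg_left habs hg.le
      calc σ * φ σ ≤ |σ| * |φ σ| := h1
        _ ≤ |σ| * (g * ((1/4) * |σ|)) := by
            exact mul_le_mul_of_nonneg_left h2 (abs_nonneg _)
        _ = (g/4) * |σ|^2 := by ring
        _ = (g/4) * σ^2 := by rw [sq_abs]
  refine ⟨key, fun σ hσ => ?_⟩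
  obtain ⟨h1, h2⟩ := key σ
  have hσ2 : (0:ℝ) < σ^2 := by positivity
  have heq : φ σ / σ = (σ * φ σ) / σ^2 := by field_simp
  rw [heq]
  exact ⟨div_nonneg h1 (sq_nonneg σ), (div_le_iff₀ hσ2).2 (by linarith)⟩
end

section
/- Let α, β, g, λ, T be strictly positive real numbers with T < 4/(g·λ·α·β) and g·β·λ < 2, and set ν₀ = 8/(g²α²β²). Then for every ω ∈ ℝ, (ν₀/2 - T²λ²/4)·ω⁴ + α²·ν₀·(1 - g·β·λ/2)·ω² + α⁴·ν₀/2 > 0. Equivalently, -(T²ω⁴λ²)/4 - (g·α²·β·ν₀·ω²·λ)/2 + (ν₀/2)·(α² + ω²)² > 0 for all ω. -/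
/-- The frequency-domain condition of the circle criterion for the neural mass
model network: for positive `α, β, g, λ, T` with `T < 4/(gλαβ)` and `gβλ < 2`,
and `ν₀ = 8/(g²α²β²)`, for every `ω`,
`(ν₀/2 - T²λ²/4)ω⁴ + α²ν₀(1 - gβλ/2)ω² + α⁴ν₀/2 > 0`, equivalently
`-(T²ω⁴λ²)/4 - (gα²βν₀ω²λ)/2 + (ν₀/2)(α² + ω²)² > 0`. -/
theorem stmt_14 (α β g lam T ν₀ : ℝ)
    (hα : 0 < α) (hβ : 0 < β) (hg : 0 < g) (hlam : 0 < lam) (hT : 0 < T)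
    (hTb : T < 4 / (g * lam * α * β)) (hgbl : g * β * lam < 2)
    (hν : ν₀ = 8 / (g ^ 2 * α ^ 2 * β ^ 2)) :
    ∀ ω : ℝ,
      0 < (ν₀ / 2 - T ^ 2 * lam ^ 2 / 4) * ω ^ 4
          + α ^ 2 * ν₀ * (1 - g * β * lam / 2) * ω ^ 2 + α ^ 4 * ν₀ / 2 ∧
      0 < -(T ^ 2 * ω ^ 4 * lam ^ 2) / 4 - g * α ^ 2 * β * ν₀ * ω ^ 2 * lam / 2
          + (ν₀ / 2) * (α ^ 2 + ω ^ 2) ^ 2 := by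
  have hprod : T * (g * lam * α * β) < 4 := by
    rwa [lt_div_iff₀ (by positivity : (0:ℝ) < g * lam * α * β)] at hTb
  have hν0 : 0 < ν₀ := by rw [hν]; positivity
  have hν' : ν₀ * (g ^ 2 * α ^ 2 * β ^ 2) = 8 := by
    rw [hν]; field_simp
  have hsq : (T * (g * lam * α * β)) ^ 2 < 16 := by
    nlinarith [mul_pos hT (by positivity : (0:ℝ) < g * lam * α * β)]
  have hc4 : 0 < ν₀ / 2 - T ^ 2 * lam ^ 2 / 4 := by
    nlinarith [hsq, hν', sq_nonneg (α * β * g), mul_pos (mul_pos hg hα) hβ,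
      sq_nonneg (g * α * β)]
  have hc2 : 0 ≤ α ^ 2 * ν₀ * (1 - g * β * lam / 2) := by
    have : 0 ≤ 1 - g * β * lam / 2 := by linarith
    positivity
  intro ω
  have h1 : 0 < (ν₀ / 2 - T ^ 2 * lam ^ 2 / 4) * ω ^ 4
      + α ^ 2 * ν₀ * (1 - g * β * lam / 2) * ω ^ 2 + α ^ 4 * ν₀ / 2 := by
    have t1 : 0 ≤ (ν₀ / 2 - T ^ 2 * lam ^ 2 / 4) * ω ^ 4 :=
      mul_nonneg hc4.le (by positivity)
    have t2 : 0 ≤ α ^ 2 * ν₀ * (1 - g * β * lam / 2) * ω ^ 2 :=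
      mul_nonneg hc2 (sq_nonneg ω)
    have t3 : 0 < α ^ 4 * ν₀ / 2 := by positivity
    linarith
  refine ⟨h1, ?_⟩
  nlinarith [h1]
end
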